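/- If |aᵀ r| ≤ 1 for every a ∈ 𝒜, then the second-moment matrix of the linear-bandit reward estimate is dominated in the Loewner order by Q⁻¹: Σ_{a∈𝒜} p_a Q⁻¹ a (aᵀ r)² aᵀ Q⁻¹ ⪯ Q⁻¹. -/

import Mathlib

open Matrix

lemma vecMulVec_transpose' {n : ℕ} (u v : Fin n → ℝ) :
    (Matrix.vecMulVec u v)ᵀ = Matrix.vecMulVec v u := by
  ext i j; simp [Matrix.vecMulVec_apply, mul_comm]

lemma mul_vecMulVec_mul {n : ℕ} (M : Matrix (Fin n) (Fin n) ℝ) (u v : Fin n → ℝ) :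
    M * Matrix.vecMulVec u v * Mᵀ = Matrix.vecMulVec (M *ᵥ u) (M *ᵥ v) := by
  ext i j
  simp only [Matrix.mul_apply, Matrix.vecMulVec_apply, Matrix.mulVec, dotProduct,
    Matrix.transpose_apply, Finset.sum_mul, Finset.mul_sum]
  apply Finset.sum_congr rfl; intro k _
  apply Finset.sum_congr rfl; intro l _
  ring

lemma sum_mulVec' {n : ℕ} {ι : Type} [Fintype ι] (M : ι → Matrix (Fin n) (Fin n) ℝ)
    (x : Fin n → ℝ) : (∑ i, M i) *ᵥ x = ∑ i, M i *ᵥ x := by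
  ext j
  simp [Matrix.mulVec, dotProduct, Finset.sum_apply, Matrix.sum_apply, Finset.sum_mul]
  rw [Finset.sum_comm]

lemma dotProduct_sum' {n : ℕ} {ι : Type} [Fintype ι] (v : Fin n → ℝ) (w : ι → Fin n → ℝ) :
    v ⬝ᵥ (∑ i, w i) = ∑ i, v ⬝ᵥ w i := by
  simp only [dotProduct, Finset.sum_apply, Finset.mul_sum]
  rw [Finset.sum_comm]

lemma vecMulVec_mulVec' {n : ℕ} (u v x : Fin n → ℝ) :
    Matrix.vecMulVec u v *ᵥ x = (v ⬝ᵥ x) • u := by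
  ext i
  simp [Matrix.mulVec, dotProduct, Matrix.vecMulVec_apply, Finset.mul_sum, mul_comm,
    mul_left_comm]

/-- If `|a_iᵀ r| ≤ 1` for every arm, then the second-moment matrix of the linear-bandit
reward estimate is dominated in the Loewner order by `Q⁻¹`:
`∑_i p_i Q⁻¹ a_i (a_iᵀ r)² a_iᵀ Q⁻¹ ⪯ Q⁻¹`, i.e., the difference is positive
semidefinite. -/
theorem linear_bandit_second_moment_loewner_bound
    (d : ℕ) (hd : 1 ≤ d)
    (ι : Type) [Fintype ι]
    (a : ι → Fin d → ℝ) (r : Fin d → ℝ)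
    (hr : ∀ i, |a i ⬝ᵥ r| ≤ 1)
    (p : ι → ℝ) (hp_nonneg : ∀ i, 0 ≤ p i) (hp_le : ∀ i, p i ≤ 1)
    (hp_sum : ∑ i, p i = 1)
    (Q : Matrix (Fin d) (Fin d) ℝ)
    (hQ : Q = ∑ i, p i • Matrix.vecMulVec (a i) (a i))
    (hQinv : IsUnit Q.det) :
    (Q⁻¹ - ∑ i, (p i * (a i ⬝ᵥ r) ^ 2) •
        Matrix.vecMulVec (Q⁻¹ *ᵥ a i) (Q⁻¹ *ᵥ a i)).PosSemidef := by
  have hQsym : Qᵀ = Q := by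
    rw [hQ, Matrix.transpose_sum]
    apply Finset.sum_congr rfl; intro i _
    rw [Matrix.transpose_smul, vecMulVec_transpose']
  have hQisym : Q⁻¹ᵀ = Q⁻¹ := by
    rw [Matrix.transpose_nonsing_inv, hQsym]
  -- key identity: Q⁻¹ = ∑ i, p i • vecMulVec (Q⁻¹ a i) (Q⁻¹ a i)
  have hkey : Q⁻¹ = ∑ i, p i • Matrix.vecMulVec (Q⁻¹ *ᵥ a i) (Q⁻¹ *ᵥ a i) := by
    have h2 : ∑ i, p i • Matrix.vecMulVec (Q⁻¹ *ᵥ a i) (Q⁻¹ *ᵥ a i)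
        = Q⁻¹ * Q * Q⁻¹ᵀ := by
      rw [hQ, Finset.mul_sum, Finset.sum_mul]
      apply Finset.sum_congr rfl; intro i _
      rw [Matrix.mul_smul, Matrix.smul_mul, mul_vecMulVec_mul]
    rw [h2, Matrix.nonsing_inv_mul Q hQinv, Matrix.one_mul, hQisym]
  have hdiff : Q⁻¹ - ∑ i, (p i * (a i ⬝ᵥ r) ^ 2) •
        Matrix.vecMulVec (Q⁻¹ *ᵥ a i) (Q⁻¹ *ᵥ a i)
      = ∑ i, (p i * (1 - (a i ⬝ᵥ r) ^ 2)) •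
        Matrix.vecMulVec (Q⁻¹ *ᵥ a i) (Q⁻¹ *ᵥ a i) := by
    nth_rewrite 1 [hkey]
    rw [← Finset.sum_sub_distrib]
    apply Finset.sum_congr rfl; intro i _
    rw [← sub_smul]
    congr 1; ring
  rw [hdiff]
  rw [Matrix.posSemidef_iff_dotProduct_mulVec]
  constructor
  · -- Hermitian
    show _ = _
    rw [Matrix.conjTranspose_sum]
    apply Finset.sum_congr rfl; intro i _
    rw [Matrix.conjTranspose_smul]
    ext j k
    simp [Matrix.conjTranspose_apply, Matrix.vecMulVec_apply, mul_comm]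
  · intro x
    rw [sum_mulVec', dotProduct_sum']
    apply Finset.sum_nonneg
    intro i _
    have hci : (a i ⬝ᵥ r) ^ 2 ≤ 1 := by
      have := hr i
      nlinarith [sq_abs (a i ⬝ᵥ r), abs_nonneg (a i ⬝ᵥ r)]
    have hterm : star x ⬝ᵥ ((p i * (1 - (a i ⬝ᵥ r) ^ 2)) •
        Matrix.vecMulVec (Q⁻¹ *ᵥ a i) (Q⁻¹ *ᵥ a i)) *ᵥ x
        = (p i * (1 - (a i ⬝ᵥ r) ^ 2)) * ((Q⁻¹ *ᵥ a i) ⬝ᵥ x) ^ 2 := by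
      rw [Matrix.smul_mulVec, dotProduct_smul, vecMulVec_mulVec']
      simp only [star_trivial, dotProduct_smul, smul_eq_mul]
      rw [dotProduct_comm x (Q⁻¹ *ᵥ a i)]
      ring
    rw [hterm]
    exact mul_nonneg (mul_nonneg (hp_nonneg i) (by linarith))
      (sq_nonneg _)
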